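/- Let N, q be natural numbers with 2q < N. Let d ∈ ℝ and D, ν, η : Fin N → ℝ with D(i) = d + ν(i) + η(i) for all i. Suppose B ≥ 0 satisfies |ν(i)| ≤ B for all i, and suppose supp(η) ⊆ W for some W ⊆ Fin N with card(W) ≤ q. Let σ ⊆ Fin N be any subset with card(σ) = N − q that minimizes π_J over all subsets J ⊆ Fin N with card(J) = N − q, where π_J := max_{i∈J} |d̂_J − D(i)| and d̂_J is the mean of D over J. Then the fused measurement error e := d̂_σ − d satisfies |e| ≤ 3B. (Theorem 2: the fusion algorithm's error is bounded by three times the noise bound, independently of the attack signals.) -/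

import Mathlib

/-- The arithmetic mean of the readings over a subset of sensors. -/
noncomputable def dhat {N : ℕ} (D : Fin N → ℝ) (J : Finset (Fin N)) : ℝ :=
  (∑ i ∈ J, D i) / (J.card : ℝ)

/-- `π_J = max_{i ∈ J} |d̂_J - D i|`: the largest deviation of a member reading
from the subset average (expressed as a supremum over the image set, which for
a nonempty finite subset coincides with the maximum). -/
noncomputable def piDev {N : ℕ} (D : Fin N → ℝ) (J : Finset (Fin N)) : ℝ :=
  sSup ((fun i => |dhat D J - D i|) '' (J : Set (Fin N)))

lemma piDev_le {N : ℕ} (D : Fin N → ℝ) (J : Finset (Fin N)) (c : ℝ) (hc : 0 ≤ c)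
    (h : ∀ i ∈ J, |dhat D J - D i| ≤ c) : piDev D J ≤ c := by
  apply Real.sSup_le _ hc
  rintro x ⟨i, hi, rfl⟩
  exact h i hi

lemma le_piDev {N : ℕ} (D : Fin N → ℝ) (J : Finset (Fin N)) (i : Fin N) (hi : i ∈ J) :
    |dhat D J - D i| ≤ piDev D J := by
  apply le_csSup
  · exact (Set.Finite.image _ J.finite_toSet).bddAbove
  · exact ⟨i, hi, rfl⟩

lemma mean_noise_bound {N : ℕ} (ν : Fin N → ℝ) (J : Finset (Fin N)) (B : ℝ) (hB : 0 ≤ B)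
    (hν : ∀ i ∈ J, |ν i| ≤ B) : |(∑ i ∈ J, ν i) / (J.card : ℝ)| ≤ B := by
  rcases J.eq_empty_or_nonempty with rfl | hJ
  · simpa using hB
  · have hcard : (0:ℝ) < J.card := by exact_mod_cast Finset.card_pos.mpr hJ
    rw [abs_div, abs_of_pos hcard, div_le_iff₀ hcard]
    calc |∑ i ∈ J, ν i| ≤ ∑ i ∈ J, |ν i| := Finset.abs_sum_le_sum_abs _ _
      _ ≤ ∑ _i ∈ J, B := Finset.sum_le_sum hν
      _ = B * J.card := by rw [Finset.sum_const, nsmul_eq_mul, mul_comm]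

/-- **Theorem 2.** Under at most `q < N / 2` attacked sensors, the fusion
algorithm — which selects a subset `σ` of cardinality `N - q` minimizing `π_J`
and outputs `d̂_σ` — has fused measurement error `e = d̂_σ - d` bounded by
three times the noise bound `B`, independently of the attack signals. -/
theorem fusion_error_le_three_noise
    (N q : ℕ) (hq : 2 * q < N)
    (d : ℝ) (D ν η : Fin N → ℝ)
    (hD : ∀ i : Fin N, D i = d + ν i + η i)
    (B : ℝ) (hB : 0 ≤ B) (hν : ∀ i : Fin N, |ν i| ≤ B)
    (W : Finset (Fin N)) (hW : W.card ≤ q)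
    (hsupp : ∀ i : Fin N, η i ≠ 0 → i ∈ W)
    (σ : Finset (Fin N)) (hσcard : σ.card = N - q)
    (hmin : ∀ J : Finset (Fin N), J.card = N - q → piDev D σ ≤ piDev D J) :
    |dhat D σ - d| ≤ 3 * B := by
  -- readings of unattacked sensors
  have hDi : ∀ i : Fin N, i ∉ W → D i = d + ν i := by
    intro i hi
    have : η i = 0 := by by_contra h; exact hi (hsupp i h)
    rw [hD i, this, add_zero]
  -- choose a clean subset J₀ of size N - q
  have hWc : N - q ≤ Wᶜ.card := by
    rw [Finset.card_compl, Fintype.card_fin]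
    omega
  obtain ⟨J₀, hJ₀sub, hJ₀card⟩ := Finset.exists_subset_card_eq hWc
  have hJ₀ne : J₀.Nonempty := by
    rw [← Finset.card_pos, hJ₀card]; omega
  have hJ₀pos : (0:ℝ) < J₀.card := by exact_mod_cast Finset.card_pos.mpr hJ₀ne
  -- π_{J₀} ≤ 2B
  have hpiJ₀ : piDev D J₀ ≤ 2 * B := by
    apply piDev_le _ _ _ (by linarith)
    intro i hi
    have hclean : ∀ j ∈ J₀, D j = d + ν j := fun j hj =>
      hDi j (Finset.mem_compl.mp (hJ₀sub hj))
    have hdhat : dhat D J₀ = d + (∑ j ∈ J₀, ν j) / (J₀.card : ℝ) := by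
      unfold dhat
      rw [Finset.sum_congr rfl hclean, Finset.sum_add_distrib, Finset.sum_const,
        nsmul_eq_mul]
      field_simp
    rw [hdhat, hclean i hi]
    have h1 := mean_noise_bound ν J₀ B hB (fun j _ => hν j)
    have h2 := hν i
    calc |d + (∑ j ∈ J₀, ν j) / (J₀.card : ℝ) - (d + ν i)|
        = |(∑ j ∈ J₀, ν j) / (J₀.card : ℝ) - ν i| := by ring_nf
      _ ≤ |(∑ j ∈ J₀, ν j) / (J₀.card : ℝ)| + |ν i| := abs_sub _ _
      _ ≤ 2 * B := by linarith
  have hpiσ : piDev D σ ≤ 2 * B := le_trans (hmin J₀ hJ₀card) hpiJ₀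
  -- σ contains a clean sensor
  have hcl : (σ \ W).Nonempty := by
    rw [← Finset.card_pos]
    have := Finset.le_card_sdiff W σ
    omega
  obtain ⟨j, hj⟩ := hcl
  have hjσ : j ∈ σ := (Finset.mem_sdiff.mp hj).1
  have hjW : j ∉ W := (Finset.mem_sdiff.mp hj).2
  have h1 : |dhat D σ - D j| ≤ 2 * B := le_trans (le_piDev D σ j hjσ) hpiσ
  have h2 : |D j - d| ≤ B := by rw [hDi j hjW]; simpa using hν j
  calc |dhat D σ - d| = |(dhat D σ - D j) + (D j - d)| := by ring_nf
    _ ≤ |dhat D σ - D j| + |D j - d| := abs_add_le _ _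
    _ ≤ 3 * B := by linarith
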